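/- Let Q be a symmetric g×g matrix of linear forms over R = ℤ[x₀,x₁,…,x_n] (indices 0..g−1 for rows/columns) such that the variable x₀ appears only in the entry q₀₀ (with coefficient 1). Suppose integers a_{ijk} and linear forms b_{ijk} ∈ ℤ[x₁,…,x_n] with b_{0jk} = 0 satisfy, for all 0 ≤ r < s < t < g: ∑_i (b_{irs}q_{ti} − b_{irt}q_{si} + b_{ist}q_{ri}) = 2∑_{i<j} det[(q_{ri},q_{rj},a_{ijr}),(q_{si},q_{sj},a_{ijs}),(q_{ti},q_{tj},a_{ijt})]. Then for all 0 < s < t, the coefficient of x₀ on the right-hand side with r = 0 forces ∑_{j≥1} (q_{sj}a_{0jt} − q_{tj}a_{0js}) = 0. -/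

import Mathlib

open MvPolynomial Matrix Finset


lemma pderiv_zero_of_degreeOf_zero {n : ℕ} {p : MvPolynomial (Fin (n + 1)) ℤ}
    (h : MvPolynomial.degreeOf (0 : Fin (n + 1)) p = 0) :
    pderiv (0 : Fin (n + 1)) p = 0 := by
  apply pderiv_eq_zero_of_notMem_vars
  intro hm
  obtain ⟨d, hd, hid⟩ := (mem_vars 0).mp hm
  rw [degreeOf_eq_sup] at h
  have : d 0 ≤ 0 := (Finset.le_sup (f := fun d => d 0) hd).trans h.le
  exact absurd (Nat.le_zero.mp this) (Finsupp.mem_support_iff.mp hid)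

/-- Let `Q = (q_{ij})` (indices `0 ≤ i,j ≤ g`) be a symmetric
matrix of homogeneous linear forms over `ℤ[x₀,…,x_n]` in which `x₀` occurs only in
`q₀₀`, with coefficient 1.  Suppose integers `a_{ijk}` and linear forms
`b_{ijk} ∈ ℤ[x₁,…,x_n]` with `b_{0jk} = 0` and `b_{i0k} = 0` satisfy, for all
`r < s < t`,
`∑_i (b_{irs}q_{ti} − b_{irt}q_{si} + b_{ist}q_{ri})
  = 2 ∑_{i<j} det [[q_{ri},q_{rj},a_{ijr}],[q_{si},q_{sj},a_{ijs}],[q_{ti},q_{tj},a_{ijt}]]`.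
Then extracting the coefficient of `x₀` at `r = 0` forces, for all `0 < s < t`,
`∑_{j ≥ 1} (q_{sj} a_{0jt} − q_{tj} a_{0js}) = 0`. -/
theorem stmt_18 {n g : ℕ}
    (q : Fin (g + 1) → Fin (g + 1) → MvPolynomial (Fin (n + 1)) ℤ)
    (hsym : ∀ i j, q i j = q j i)
    (hlin : ∀ i j, (q i j).IsHomogeneous 1)
    (hq00 : MvPolynomial.degreeOf (0 : Fin (n + 1)) (q 0 0 - X 0) = 0)
    (hq : ∀ i j : Fin (g + 1), ¬(i = 0 ∧ j = 0) →
      MvPolynomial.degreeOf (0 : Fin (n + 1)) (q i j) = 0)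
    (a : Fin (g + 1) → Fin (g + 1) → Fin (g + 1) → ℤ)
    (b : Fin (g + 1) → Fin (g + 1) → Fin (g + 1) → MvPolynomial (Fin (n + 1)) ℤ)
    (hblin : ∀ i j k, (b i j k).IsHomogeneous 1)
    (hbx0 : ∀ i j k, MvPolynomial.degreeOf (0 : Fin (n + 1)) (b i j k) = 0)
    (hb0 : ∀ j k, b 0 j k = 0) (hb0' : ∀ i k, b i 0 k = 0)
    (hid : ∀ r s t : Fin (g + 1), r < s → s < t →
      ∑ i : Fin (g + 1),
          (b i r s * q t i - b i r t * q s i + b i s t * q r i)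
        = 2 * ∑ i : Fin (g + 1), ∑ j ∈ univ.filter (fun j => i < j),
            (!![q r i, q r j, C (a i j r);
                q s i, q s j, C (a i j s);
                q t i, q t j, C (a i j t)] :
              Matrix (Fin 3) (Fin 3) (MvPolynomial (Fin (n + 1)) ℤ)).det) :
    ∀ s t : Fin (g + 1), 0 < s → s < t →
      ∑ j ∈ univ.filter (fun j : Fin (g + 1) => 0 < j),
          (q s j * C (a 0 j t) - q t j * C (a 0 j s)) = 0 := by
  intro s t hs hst
  have hs0 : s ≠ 0 := hs.ne'
  have ht0 : t ≠ 0 := (hs.trans hst).ne'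
  have hDq00 : pderiv (0 : Fin (n + 1)) (q 0 0) = 1 := by
    have h1 := pderiv_zero_of_degreeOf_zero hq00
    rw [map_sub, pderiv_X_self, sub_eq_zero] at h1
    exact h1
  have hDq : ∀ i j : Fin (g + 1), ¬(i = 0 ∧ j = 0) →
      pderiv (0 : Fin (n + 1)) (q i j) = 0 :=
    fun i j h => pderiv_zero_of_degreeOf_zero (hq i j h)
  have hDb : ∀ i j k, pderiv (0 : Fin (n + 1)) (b i j k) = 0 :=
    fun i j k => pderiv_zero_of_degreeOf_zero (hbx0 i j k)
  have H := congrArg (⇑(pderiv (0 : Fin (n + 1)))) (hid 0 s t hs hst)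
  have hL : (pderiv (0 : Fin (n + 1)))
      (∑ i : Fin (g + 1), (b i 0 s * q t i - b i 0 t * q s i + b i s t * q 0 i)) = 0 := by
    rw [map_sum]
    apply Finset.sum_eq_zero
    intro i _
    rw [map_add, map_sub, pderiv_mul, pderiv_mul, pderiv_mul, hDb, hDb, hDb]
    rcases eq_or_ne i 0 with h | h
    · subst h; simp [hb0]
    · rw [hDq t i (fun h' => ht0 h'.1), hDq s i (fun h' => hs0 h'.1),
        hDq 0 i (fun h' => h h'.2), hb0', hb0']
      ring
  rw [hL] at H
  have hDdet : ∀ i j : Fin (g + 1), i < j →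
      (pderiv (0 : Fin (n + 1)))
        ((!![q 0 i, q 0 j, C (a i j 0);
            q s i, q s j, C (a i j s);
            q t i, q t j, C (a i j t)] :
          Matrix (Fin 3) (Fin 3) (MvPolynomial (Fin (n + 1)) ℤ)).det)
      = if i = 0 then q s j * C (a i j t) - q t j * C (a i j s) else 0 := by
    intro i j hij
    have hj : j ≠ 0 := ((Fin.zero_le i).trans_lt hij).ne'
    rw [Matrix.det_fin_three]
    rcases eq_or_ne i 0 with h | h
    · subst h
      rw [if_pos rfl]
      simp only [Matrix.cons_val', Matrix.cons_val_zero, Matrix.cons_val_one, Matrix.head_cons, Matrix.empty_val', Matrix.cons_val_fin_one, Matrix.head_fin_const, Matrix.cons_val_two, Matrix.tail_cons, Matrix.of_apply, Matrix.cons_val_zero, map_sub, map_add, pderiv_mul, pderiv_C, hDq00,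
        hDq 0 j (fun h' => hj h'.2), hDq s 0 (fun h' => hs0 h'.1),
        hDq s j (fun h' => hs0 h'.1), hDq t 0 (fun h' => ht0 h'.1),
        hDq t j (fun h' => ht0 h'.1)]
      ring
    · rw [if_neg h]
      simp only [Matrix.cons_val', Matrix.cons_val_zero, Matrix.cons_val_one, Matrix.head_cons, Matrix.empty_val', Matrix.cons_val_fin_one, Matrix.head_fin_const, Matrix.cons_val_two, Matrix.tail_cons, Matrix.of_apply, Matrix.cons_val_zero, map_sub, map_add, pderiv_mul, pderiv_C,
        hDq 0 i (fun h' => h h'.2), hDq 0 j (fun h' => hj h'.2),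
        hDq s i (fun h' => hs0 h'.1), hDq s j (fun h' => hs0 h'.1),
        hDq t i (fun h' => ht0 h'.1), hDq t j (fun h' => ht0 h'.1)]
      ring
  have hR : (pderiv (0 : Fin (n + 1)))
      (∑ i : Fin (g + 1), ∑ j ∈ univ.filter (fun j => i < j),
        (!![q 0 i, q 0 j, C (a i j 0);
            q s i, q s j, C (a i j s);
            q t i, q t j, C (a i j t)] :
          Matrix (Fin 3) (Fin 3) (MvPolynomial (Fin (n + 1)) ℤ)).det)
      = ∑ j ∈ univ.filter (fun j : Fin (g + 1) => 0 < j),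
          (q s j * C (a 0 j t) - q t j * C (a 0 j s)) := by
    rw [map_sum, Finset.sum_eq_single 0]
    · rw [map_sum]
      apply Finset.sum_congr rfl
      intro j hj
      rw [hDdet 0 j (Finset.mem_filter.mp hj).2, if_pos rfl]
    · intro i _ hi
      rw [map_sum]
      apply Finset.sum_eq_zero
      intro j hj
      rw [hDdet i j (Finset.mem_filter.mp hj).2, if_neg hi]
    · simp
  rw [two_mul, map_add, hR, ← two_mul] at H
  have h2 : (2 : MvPolynomial (Fin (n + 1)) ℤ) ≠ 0 := two_ne_zero
  rcases mul_eq_zero.mp H.symm with h | h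
  · exact absurd h h2
  · exact h
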